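/- (Craig interpolation for propositional logic) If A and B are propositional formulas such that A → B is valid and A and B share at least one propositional variable, then there exists a formula C whose propositional variables all occur in both A and B, such that A → C and C → B are both valid. -/

import Mathlib

/-- Propositional formulas over variables indexed by naturals. -/
inductive PropForm where
  | var : Nat → PropForm
  | fls : PropForm
  | tru : PropForm
  | neg : PropForm → PropForm
  | conj : PropForm → PropForm → PropForm
  | disj : PropForm → PropForm → PropForm
deriving DecidableEq

/-- Classical Boolean evaluation of a formula under a valuation. -/
def PropForm.eval (v : Nat → Bool) : PropForm → Bool
  | .var n => v n
  | .fls => false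
  | .tru => true
  | .neg A => !(A.eval v)
  | .conj A B => A.eval v && B.eval v
  | .disj A B => A.eval v || B.eval v

/-- The propositional variables occurring in a formula. -/
def PropForm.vars : PropForm → Finset Nat
  | .var n => {n}
  | .fls => ∅
  | .tru => ∅
  | .neg A => A.vars
  | .conj A B => A.vars ∪ B.vars
  | .disj A B => A.vars ∪ B.vars

/-- A formula is valid iff true under every valuation. -/
def PropForm.Valid (A : PropForm) : Prop := ∀ v : Nat → Bool, A.eval v = true

/-- Literals: a variable or its negation. -/
inductive Lit where
  | pos : Nat → Lit
  | neg : Nat → Lit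
deriving DecidableEq

/-- The complement of a literal. -/
def Lit.compl : Lit → Lit
  | .pos n => .neg n
  | .neg n => .pos n

/-- The variable of a literal. -/
def Lit.var : Lit → Nat
  | .pos n => n
  | .neg n => n

/-- Evaluation of a literal. -/
def Lit.eval (v : Nat → Bool) : Lit → Bool
  | .pos n => v n
  | .neg n => !(v n)

/-- A literal as a formula. -/
def Lit.toForm : Lit → PropForm
  | .pos n => .var n
  | .neg n => .neg (.var n)

/-- A clause (finite set of literals read disjunctively) is satisfied by `v`. -/
def clauseSat (v : Nat → Bool) (C : Finset Lit) : Prop := ∃ l ∈ C, l.eval v = true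

/-- A conjunction of literals (finite set read conjunctively) is satisfied by `v`. -/
def cubeSat (v : Nat → Bool) (C : Finset Lit) : Prop := ∀ l ∈ C, l.eval v = true

/-- Substitute a boolean constant for a variable. -/
def PropForm.subst (n : Nat) (b : Bool) : PropForm → PropForm
  | .var m => if m = n then (if b then .tru else .fls) else .var m
  | .fls => .fls
  | .tru => .tru
  | .neg A => .neg (A.subst n b)
  | .conj A B => .conj (A.subst n b) (B.subst n b)
  | .disj A B => .disj (A.subst n b) (B.subst n b)

theorem PropForm.eval_subst (A : PropForm) (n : Nat) (b : Bool) (v : Nat → Bool) :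
    (A.subst n b).eval v = A.eval (Function.update v n b) := by
  induction A with
  | var m =>
    simp only [subst, eval]
    by_cases h : m = n
    · subst h; cases b <;> simp [eval, Function.update]
    · simp [h, eval, Function.update]
  | fls => rfl
  | tru => rfl
  | neg A ih => simp [subst, eval, ih]
  | conj A B ih1 ih2 => simp [subst, eval, ih1, ih2]
  | disj A B ih1 ih2 => simp [subst, eval, ih1, ih2]

theorem PropForm.vars_subst (A : PropForm) (n : Nat) (b : Bool) :
    (A.subst n b).vars ⊆ A.vars \ {n} := by
  induction A with
  | var m =>
    by_cases h : m = n
    · subst h; cases b <;> simp [subst, vars]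
    · simp only [subst, if_neg h, vars]
      intro x hx
      simp only [Finset.mem_singleton] at hx
      simp [vars, hx, h]
  | fls => simp [subst, vars]
  | tru => simp [subst, vars]
  | neg A ih => simpa [subst, vars] using ih
  | conj A B ih1 ih2 =>
    simp only [subst, vars, Finset.union_sdiff_distrib]
    exact Finset.union_subset_union ih1 ih2
  | disj A B ih1 ih2 =>
    simp only [subst, vars, Finset.union_sdiff_distrib]
    exact Finset.union_subset_union ih1 ih2

/-- Eliminate one variable. -/
def PropForm.elim (n : Nat) (A : PropForm) : PropForm :=
  .disj (A.subst n true) (A.subst n false)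

/-- Eliminate a list of variables. -/
def PropForm.elimList : List Nat → PropForm → PropForm
  | [], A => A
  | n :: ns, A => PropForm.elimList ns (A.elim n)

theorem PropForm.eval_congr (A : PropForm) (v w : Nat → Bool)
    (h : ∀ n ∈ A.vars, v n = w n) : A.eval v = A.eval w := by
  induction A with
  | var m => exact h m (by simp [vars])
  | fls => rfl
  | tru => rfl
  | neg A ih => simp [eval, ih (fun n hn => h n hn)]
  | conj A B ih1 ih2 =>
    simp [eval, ih1 fun n hn => h n (by simp [vars, hn]),
      ih2 fun n hn => h n (by simp [vars, hn])]
  | disj A B ih1 ih2 =>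
    simp [eval, ih1 fun n hn => h n (by simp [vars, hn]),
      ih2 fun n hn => h n (by simp [vars, hn])]

theorem PropForm.vars_elim (n : Nat) (A : PropForm) :
    (A.elim n).vars ⊆ A.vars \ {n} := by
  simp only [elim, vars]
  exact Finset.union_subset (A.vars_subst n true) (A.vars_subst n false)

theorem PropForm.eval_elim_of (n : Nat) (A : PropForm) (v : Nat → Bool)
    (h : A.eval v = true) : (A.elim n).eval v = true := by
  simp only [elim, eval, eval_subst, Bool.or_eq_true]
  cases hv : v n
  · right
    have hu : Function.update v n false = v := by rw [← hv]; exact Function.update_eq_self n v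
    rw [hu]; exact h
  · left
    have hu : Function.update v n true = v := by rw [← hv]; exact Function.update_eq_self n v
    rw [hu]; exact h

theorem PropForm.eval_elim_exists (n : Nat) (A : PropForm) (v : Nat → Bool)
    (h : (A.elim n).eval v = true) :
    ∃ b, A.eval (Function.update v n b) = true := by
  simp only [elim, eval, eval_subst, Bool.or_eq_true] at h
  rcases h with h | h
  · exact ⟨true, h⟩
  · exact ⟨false, h⟩

theorem PropForm.vars_elimList (l : List Nat) (A : PropForm) :
    (PropForm.elimList l A).vars ⊆ A.vars \ l.toFinset := by
  induction l generalizing A with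
  | nil => simp [elimList]
  | cons n ns ih =>
    refine (ih (A.elim n)).trans ?_
    intro x hx
    simp only [Finset.mem_sdiff] at hx ⊢
    have := A.vars_elim n hx.1
    simp only [Finset.mem_sdiff, Finset.mem_singleton] at this
    simp only [List.toFinset_cons, Finset.mem_insert]
    exact ⟨this.1, fun h => h.elim this.2 hx.2⟩

theorem PropForm.eval_elimList_of (l : List Nat) (A : PropForm) (v : Nat → Bool)
    (h : A.eval v = true) : (PropForm.elimList l A).eval v = true := by
  induction l generalizing A with
  | nil => exact h
  | cons n ns ih => exact ih _ (A.eval_elim_of n v h)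

theorem PropForm.eval_elimList_exists (l : List Nat) (A : PropForm) (v : Nat → Bool)
    (h : (PropForm.elimList l A).eval v = true) :
    ∃ w : Nat → Bool, (∀ m, m ∉ l → w m = v m) ∧ A.eval w = true := by
  induction l generalizing A with
  | nil => exact ⟨v, fun _ _ => rfl, h⟩
  | cons n ns ih =>
    obtain ⟨w, hw, hev⟩ := ih (A.elim n) h
    obtain ⟨b, hb⟩ := A.eval_elim_exists n w hev
    refine ⟨Function.update w n b, fun m hm => ?_, hb⟩
    have hmn : m ≠ n := fun h => hm (h ▸ (List.mem_cons_self (a := n) (l := ns)))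
    rw [Function.update_of_ne hmn]
    exact hw m (fun h => hm (List.mem_cons_of_mem n h))

theorem stmt10 (A B : PropForm)
    (hvalid : ∀ v : Nat → Bool, A.eval v = true → B.eval v = true)
    (hshared : (A.vars ∩ B.vars).Nonempty) :
    ∃ C : PropForm, C.vars ⊆ A.vars ∩ B.vars ∧
      (∀ v : Nat → Bool, A.eval v = true → C.eval v = true) ∧
      (∀ v : Nat → Bool, C.eval v = true → B.eval v = true) := by
  classical
  set l := (A.vars \ B.vars).toList with hl
  refine ⟨PropForm.elimList l A, ?_, fun v h => A.eval_elimList_of l v h, ?_⟩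
  · refine (PropForm.vars_elimList l A).trans ?_
    rw [hl, Finset.toList_toFinset, Finset.sdiff_sdiff_self_left]
  · intro v h
    obtain ⟨w, hw, hev⟩ := PropForm.eval_elimList_exists l A v h
    have hB := hvalid w hev
    rw [← hB]
    apply PropForm.eval_congr
    intro n hn
    exact (hw n (by simp [hl, Finset.mem_toList, hn])).symm
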